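/- Let a < b be reals, ρ : ℝ → ℝ integrable with support contained in [a,b], n ≥ 1, and z ∈ ℝ with z ∉ [a,b]. Define, with the convention that a 0×0 determinant equals 1, the Hankel determinants D_k = det(∫_ℝ u^{i+j} ρ(u) du)_{0≤i,j≤k−1}, A_k = det(∫_ℝ u^{i+j} (z − u) ρ(u) du)_{0≤i,j≤k−1}, and B_k = det(∫_ℝ u^{i+j} ρ(u)/(z − u) du)_{0≤i,j≤k−1}. Then A_n · B_n − A_{n−1} · B_{n+1} = D_n². (This is the Fay-type identity τ_n(t−[z^{-1}])τ_n(t+[z^{-1}]) − z^{-2}τ_{n−1}(t−[z^{-1}])τ_{n+1}(t+[z^{-1}]) = τ_n(t)² written in terms of Hankel determinants.) -/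

import Mathlib

open MeasureTheory


open Matrix BigOperators

/-- Hankel matrix of a sequence. -/
def hank {α : Type*} (k : ℕ) (f : ℕ → α) : Matrix (Fin k) (Fin k) α :=
  Matrix.of fun i j => f ((i : ℕ) + (j : ℕ))

def mseq {α : Type*} [CommRing α] (β : ℕ → α) (z : α) : ℕ → α := fun t => z * β t - β (t+1)
def aseq {α : Type*} [CommRing α] (β : ℕ → α) (z : α) : ℕ → α :=
  fun t => z * mseq β z t - mseq β z (t+1)

lemma map_hank {α γ : Type*} [CommRing α] [CommRing γ] (f : α →+* γ) (k : ℕ) (g : ℕ → α) :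
    (hank k g).map f = hank k (fun t => f (g t)) := by
  ext i j; simp [hank]

lemma det_map_hank {α γ : Type*} [CommRing α] [CommRing γ] (f : α →+* γ) (k : ℕ) (g : ℕ → α) :
    f ((hank k g).det) = (hank k (fun t => f (g t))).det := by
  rw [RingHom.map_det, RingHom.mapMatrix_apply, map_hank]


lemma sum_collapse_two {F : Type*} [Field F] {N : ℕ} (p q : Fin N) (x y : F) (h : Fin N → F)
    (hf : ∀ l, h l = (if l = p then x else 0) + (if l = q then y else 0)) :
    ∑ l, h l = x + y := by
  simp only [hf, Finset.sum_add_distrib]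
  rw [Finset.sum_ite_eq' Finset.univ p (fun _ => x), Finset.sum_ite_eq' Finset.univ q (fun _ => y)]
  simp

lemma adjugate_last_last {R : Type*} [CommRing R] {k : ℕ} (M : Matrix (Fin (k+1)) (Fin (k+1)) R) :
    M.adjugate (Fin.last k) (Fin.last k) = (M.submatrix Fin.castSucc Fin.castSucc).det := by
  rw [Matrix.adjugate_apply, Matrix.det_succ_row _ (Fin.last k)]
  rw [Finset.sum_eq_single (Fin.last k)]
  · simp only [Matrix.updateRow_self, Pi.single_eq_same]
    have h1 : ((-1 : R)) ^ ((Fin.last k : ℕ) + (Fin.last k : ℕ)) = 1 := by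
      rw [Fin.val_last, ← two_mul]
      exact Even.neg_one_pow (even_two_mul k)
    rw [h1, one_mul]
    have he : (M.updateRow (Fin.last k) (Pi.single (Fin.last k) 1)).submatrix
        (Fin.last k).succAbove (Fin.last k).succAbove = M.submatrix Fin.castSucc Fin.castSucc := by
      ext i j
      simp [Fin.succAbove_last, Matrix.updateRow_apply, (Fin.castSucc_lt_last i).ne]
    rw [he, one_mul]
  · intro j _ hj
    simp only [Matrix.updateRow_self]
    rw [Pi.single_eq_of_ne hj]
    ring
  · intro h; exact absurd (Finset.mem_univ _) h


lemma jacobi_two {F : Type*} [Field F] {m : ℕ}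
    (M : Matrix (Fin m ⊕ Fin 2) (Fin m ⊕ Fin 2) F)
    (hM : IsUnit M.det) (hA : IsUnit (M.toBlocks₁₁).det) :
    M.det * (M⁻¹.toBlocks₂₂).det = (M.toBlocks₁₁).det := by
  set A := M.toBlocks₁₁ with hAdef
  set B := M.toBlocks₁₂
  set C := M.toBlocks₂₁
  set D := M.toBlocks₂₂
  set P := M⁻¹.toBlocks₁₁
  set Q := M⁻¹.toBlocks₁₂
  set R := M⁻¹.toBlocks₂₁
  set T := M⁻¹.toBlocks₂₂
  have hMb : M = fromBlocks A B C D := (fromBlocks_toBlocks M).symm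
  have hNb : M⁻¹ = fromBlocks P Q R T := (fromBlocks_toBlocks _).symm
  have hinv : M * M⁻¹ = 1 := mul_nonsing_inv M hM
  rw [hNb, hMb, fromBlocks_multiply] at hinv
  have h112 : (1 : Matrix (Fin m ⊕ Fin 2) (Fin m ⊕ Fin 2) F).toBlocks₁₂ = 0 := by
    ext i j; simp [Matrix.toBlocks₁₂, Matrix.one_apply]
  have h122 : (1 : Matrix (Fin m ⊕ Fin 2) (Fin m ⊕ Fin 2) F).toBlocks₂₂ = 1 := by
    ext i j; simp [Matrix.toBlocks₂₂, Matrix.one_apply, Sum.inr.injEq]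
  have e12 : A * Q + B * T = 0 := by
    have h := congrArg Matrix.toBlocks₁₂ hinv
    rwa [Matrix.toBlocks_fromBlocks₁₂, h112] at h
  have e22 : C * Q + D * T = 1 := by
    have h := congrArg Matrix.toBlocks₂₂ hinv
    rwa [Matrix.toBlocks_fromBlocks₂₂, h122] at h
  have hQ : Q = -(A⁻¹ * (B * T)) := by
    calc Q = (A⁻¹ * A) * Q := by rw [nonsing_inv_mul _ hA, Matrix.one_mul]
    _ = A⁻¹ * (A * Q) := Matrix.mul_assoc _ _ _
    _ = -(A⁻¹ * (B * T)) := by rw [eq_neg_of_add_eq_zero_left e12, Matrix.mul_neg]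
  have hSchur : (D - C * A⁻¹ * B) * T = 1 := by
    have hCQ : C * Q = -(C * A⁻¹ * B * T) := by
      rw [hQ, Matrix.mul_neg, ← Matrix.mul_assoc, ← Matrix.mul_assoc]
    calc (D - C * A⁻¹ * B) * T = D * T - C * A⁻¹ * B * T := Matrix.sub_mul _ _ _
    _ = C * Q + D * T := by rw [hCQ]; abel
    _ = 1 := e22
  have hdets : (D - C * A⁻¹ * B).det * T.det = 1 := by
    rw [← Matrix.det_mul, hSchur, Matrix.det_one]
  have hI : Invertible A := A.invertibleOfIsUnitDet hA
  have hdetM : M.det = A.det * (D - C * A⁻¹ * B).det := by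
    rw [hMb, Matrix.det_fromBlocks₁₁, Matrix.invOf_eq_nonsing_inv]
  rw [hdetM]
  calc A.det * (D - C * A⁻¹ * B).det * T.det
      = A.det * ((D - C * A⁻¹ * B).det * T.det) := by ring
  _ = A.det := by rw [hdets, mul_one]


variable {F : Type*} [Field F]


/-- The bidiagonal column-operation matrix. -/
def Chat (m : ℕ) (z : F) : Matrix (Fin (m+2)) (Fin (m+2)) F :=
  Matrix.of fun i j =>
    if (i : ℕ) = (j : ℕ) then (if (j : ℕ) = m+1 then 1 else z)
    else if (i : ℕ) = (j : ℕ) + 1 then -1 else 0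

lemma Chat_lowerTriangular (m : ℕ) (z : F) {i j : Fin (m+2)} (h : i < j) :
    Chat m z i j = 0 := by
  have h' : (i : ℕ) < (j : ℕ) := h
  simp only [Chat, of_apply]
  rw [if_neg (by omega), if_neg (by omega)]

lemma Chat_det (m : ℕ) (z : F) : (Chat m z).det = z^(m+1) := by
  rw [Matrix.det_of_lowerTriangular (Chat m z)
    (by intro i j hij; exact Chat_lowerTriangular m z hij)]
  have : ∀ i : Fin (m+2), Chat m z i i = if (i:ℕ) = m+1 then 1 else z := by
    intro i; simp [Chat]
  simp_rw [this]
  rw [Fin.prod_univ_castSucc]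
  have h1 : ((Fin.last (m+1) : Fin (m+2)) : ℕ) = m+1 := rfl
  rw [h1, if_pos rfl, mul_one]
  have h2 : ∀ i : Fin (m+1), ((Fin.castSucc i : Fin (m+2)) : ℕ) ≠ m+1 := by
    intro i; have := i.isLt; simp [Fin.castSucc]; omega
  calc (∏ i : Fin (m+1), if ((Fin.castSucc i : Fin (m+2)) : ℕ) = m+1 then (1:F) else z)
      = ∏ _i : Fin (m+1), z := Finset.prod_congr rfl (fun i _ => by rw [if_neg (h2 i)])
  _ = z^(m+1) := by rw [Finset.prod_const]; simp

lemma sum_collapse_two' {N : ℕ} (p q : Fin N) (x y : F) (h : Fin N → F)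
    (hf : ∀ l, h l = (if l = p then x else 0) + (if l = q then y else 0)) :
    ∑ l, h l = x + y := by
  simp only [hf, Finset.sum_add_distrib]
  rw [Finset.sum_ite_eq' Finset.univ p (fun _ => x), Finset.sum_ite_eq' Finset.univ q (fun _ => y)]
  simp

section entries
variable (m : ℕ) (z : F)

/-- Collapse a sum against column `j < m+1` of `Chat`. -/
lemma col_collapse (j : Fin (m+2)) (hj : (j : ℕ) ≤ m) (v : Fin (m+2) → F) :
    ∑ l, v l * Chat m z l j = z * v j - v ⟨(j:ℕ)+1, by omega⟩ := by
  have hq : ((j:ℕ)+1) < m+2 := by omega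
  set q : Fin (m+2) := ⟨(j:ℕ)+1, hq⟩ with hqdef
  rw [sum_collapse_two' j q (z * v j) (-(v q))]
  · ring
  · intro l
    by_cases h1 : l = j
    · subst h1
      have : Chat m z l l = z := by simp [Chat]; intro h; omega
      rw [this, if_pos rfl, if_neg (by simp only [hqdef, Fin.ext_iff, Fin.val_mk]; omega)]
      ring
    · by_cases h2 : l = q
      · subst h2
        have : Chat m z q j = -1 := by
          simp only [Chat, of_apply, hqdef]
          norm_num
        rw [this, if_neg h1, if_pos rfl]
        ring
      · have : Chat m z l j = 0 := by
          simp only [Chat, of_apply]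
          rw [if_neg (by rw [Fin.ext_iff] at h1; omega),
            if_neg (by rw [Fin.ext_iff] at h2; simp only [hqdef, Fin.val_mk] at h2; omega)]
        rw [this, if_neg h1, if_neg h2]
        simp

/-- Collapse a sum against the last row of `Chat`. -/
lemma row_collapse (v : Fin (m+2) → F) :
    ∑ l, Chat m z (Fin.last (m+1)) l * v l = v (Fin.last (m+1)) - v ⟨m, by omega⟩ := by
  set p : Fin (m+2) := ⟨m, by omega⟩ with hpdef
  set L : Fin (m+2) := Fin.last (m+1) with hLdef
  have hCL : Chat m z L L = 1 := by
    simp only [Chat, of_apply, hLdef, Fin.val_last]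
    norm_num
  have hCp : Chat m z L p = -1 := by
    simp only [Chat, of_apply, hLdef, hpdef, Fin.val_last, Fin.val_mk]
    norm_num
  rw [sum_collapse_two' L p (v L) (-(v p))]
  · ring
  · intro l
    by_cases h1 : l = L
    · rw [h1, hCL, if_pos rfl,
        if_neg (by simp only [hLdef, hpdef, Fin.ext_iff, Fin.val_mk, Fin.val_last]; omega)]
      ring
    · by_cases h2 : l = p
      · rw [h2, hCp, if_neg (by rw [← h2]; exact h1), if_pos rfl]
        ring
      · have hC0 : Chat m z L l = 0 := by
          simp only [Chat, of_apply, hLdef, Fin.val_last]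
          rw [if_neg (by rw [Fin.ext_iff, hLdef] at h1; simp only [Fin.val_last] at h1; omega),
            if_neg (by rw [Fin.ext_iff, hpdef] at h2; simp only [Fin.val_mk] at h2; omega)]
        rw [hC0, if_neg h1, if_neg h2]
        simp

variable (β : ℕ → F)

lemma GChat_entry (i j : Fin (m+2)) (hj : (j : ℕ) ≤ m) :
    ((hank (m+2) β) * (Chat m z)) i j
      = z * β ((i:ℕ)+(j:ℕ)) - β ((i:ℕ)+(j:ℕ)+1) := by
  rw [Matrix.mul_apply, col_collapse m z j hj]
  simp only [hank, of_apply, Fin.val_mk]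
  rw [← Nat.add_assoc]

lemma ChatTG_entry (i j : Fin (m+2)) (hi : (i : ℕ) ≤ m) :
    ((Chat m z)ᵀ * (hank (m+2) β)) i j
      = z * β ((i:ℕ)+(j:ℕ)) - β ((i:ℕ)+(j:ℕ)+1) := by
  rw [Matrix.mul_apply]
  have : ∀ k, (Chat m z)ᵀ i k * (hank (m+2) β) k j
      = (fun k => (hank (m+2) β) k j) k * Chat m z k i := by
    intro k; simp only [transpose_apply]; ring
  rw [Finset.sum_congr rfl (fun k _ => this k), col_collapse m z i hi]
  simp only [hank, of_apply, Fin.val_mk]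
  rw [show (i:ℕ)+1+(j:ℕ) = (i:ℕ)+(j:ℕ)+1 from by omega]

lemma S_entry (i j : Fin (m+2)) (hi : (i : ℕ) ≤ m) (hj : (j : ℕ) ≤ m) :
    ((Chat m z)ᵀ * (hank (m+2) β) * (Chat m z)) i j
      = z * (z * β ((i:ℕ)+(j:ℕ)) - β ((i:ℕ)+(j:ℕ)+1))
        - (z * β ((i:ℕ)+(j:ℕ)+1) - β ((i:ℕ)+(j:ℕ)+2)) := by
  rw [Matrix.mul_apply, col_collapse m z j hj]
  rw [ChatTG_entry m z β i j hi, ChatTG_entry m z β i _ hi]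
  simp only [Fin.val_mk]
  rw [show (i:ℕ) + ((j:ℕ)+1) = (i:ℕ)+(j:ℕ)+1 from by omega,
    show (i:ℕ)+(j:ℕ)+1+1 = (i:ℕ)+(j:ℕ)+2 from by omega]

end entries


lemma corner_det {k : ℕ} (M : Matrix (Fin (k+1)) (Fin (k+1)) F) (h : M.det ≠ 0) :
    M.det * M⁻¹ (Fin.last k) (Fin.last k) = (M.submatrix Fin.castSucc Fin.castSucc).det := by
  rw [Matrix.inv_def, Matrix.smul_apply, smul_eq_mul, ← adjugate_last_last,
    Ring.inverse_eq_inv]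
  rw [← mul_assoc, mul_inv_cancel₀ h, one_mul]

lemma field_core (m : ℕ) (β : ℕ → F) (z : F) (hz : z ≠ 0)
    (hG : (hank (m+2) β).det ≠ 0) (hA : (hank m (aseq β z)).det ≠ 0) :
    (hank (m+1) (aseq β z)).det * (hank (m+1) β).det
      - (hank m (aseq β z)).det * (hank (m+2) β).det
      = ((hank (m+1) (mseq β z)).det)^2 := by
  set G : Matrix (Fin (m+2)) (Fin (m+2)) F := hank (m+2) β with hGdef
  set C : Matrix (Fin (m+2)) (Fin (m+2)) F := Chat m z with hCdef
  set S : Matrix (Fin (m+2)) (Fin (m+2)) F := Cᵀ * G * C with hSdef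
  set L : Fin (m+2) := Fin.last (m+1) with hLdef
  set p : Fin (m+2) := ⟨m, by omega⟩ with hpdef
  set P : Matrix (Fin (m+2)) (Fin (m+2)) F := S⁻¹ with hPdef
  have hCd : C.det = z^(m+1) := Chat_det m z
  have hCTd : Cᵀ.det = z^(m+1) := by rw [Matrix.det_transpose, hCd]
  have hCd0 : C.det ≠ 0 := by rw [hCd]; exact pow_ne_zero _ hz
  have hCTd0 : Cᵀ.det ≠ 0 := by rw [hCTd]; exact pow_ne_zero _ hz
  have hSd : S.det = (z^(m+1) * G.det) * z^(m+1) := by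
    rw [hSdef, Matrix.det_mul, Matrix.det_mul, hCTd, hCd]
  have hSd0 : S.det ≠ 0 := by
    rw [hSd]; exact mul_ne_zero (mul_ne_zero (pow_ne_zero _ hz) hG) (pow_ne_zero _ hz)
  have hGCd : (G * C).det = G.det * z^(m+1) := by rw [Matrix.det_mul, hCd]
  have hGCd0 : (G * C).det ≠ 0 := by rw [hGCd]; exact mul_ne_zero hG (pow_ne_zero _ hz)
  have hCGd : (Cᵀ * G).det = z^(m+1) * G.det := by rw [Matrix.det_mul, hCTd]
  have hCGd0 : (Cᵀ * G).det ≠ 0 := by rw [hCGd]; exact mul_ne_zero (pow_ne_zero _ hz) hG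
  -- submatrix identifications
  have idA : S.submatrix Fin.castSucc Fin.castSucc = hank (m+1) (aseq β z) := by
    ext i j
    have := S_entry m z β (Fin.castSucc i) (Fin.castSucc j)
      (by simp [Fin.castSucc]; omega) (by simp [Fin.castSucc]; omega)
    simp only [Matrix.submatrix_apply]
    rw [hSdef, this]
    simp [hank, aseq, mseq, Fin.coe_castSucc]
  have idB : G.submatrix Fin.castSucc Fin.castSucc = hank (m+1) β := by
    ext i j
    simp [hGdef, hank, Fin.coe_castSucc]
  have idD : (G * C).submatrix Fin.castSucc Fin.castSucc = hank (m+1) (mseq β z) := by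
    ext i j
    have := GChat_entry m z β (Fin.castSucc i) (Fin.castSucc j) (by simp [Fin.castSucc]; omega)
    simp only [Matrix.submatrix_apply]
    rw [hGdef, hCdef, this]
    simp [hank, mseq, Fin.coe_castSucc]
  have idD' : (Cᵀ * G).submatrix Fin.castSucc Fin.castSucc = hank (m+1) (mseq β z) := by
    ext i j
    have := ChatTG_entry m z β (Fin.castSucc i) (Fin.castSucc j) (by simp [Fin.castSucc]; omega)
    simp only [Matrix.submatrix_apply]
    rw [hGdef, hCdef, this]
    simp [hank, mseq, Fin.coe_castSucc]
  -- corner determinant identities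
  have e1 : S.det * P L L = (hank (m+1) (aseq β z)).det := by
    rw [hPdef, hLdef, corner_det S hSd0, idA]
  have e2 : G.det * G⁻¹ L L = (hank (m+1) β).det := by
    rw [hLdef, corner_det G hG, idB]
  have e3 : (G * C).det * (G * C)⁻¹ L L = (hank (m+1) (mseq β z)).det := by
    rw [hLdef, corner_det _ hGCd0, idD]
  have e4 : (Cᵀ * G).det * (Cᵀ * G)⁻¹ L L = (hank (m+1) (mseq β z)).det := by
    rw [hLdef, corner_det _ hCGd0, idD']
  -- inverse identities
  have iS : S⁻¹ = C⁻¹ * (G⁻¹ * Cᵀ⁻¹) := by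
    rw [hSdef, Matrix.mul_inv_rev, Matrix.mul_inv_rev]
  have iG : G⁻¹ = C * S⁻¹ * Cᵀ := by
    rw [iS]
    have h1 : C * (C⁻¹ * (G⁻¹ * Cᵀ⁻¹)) * Cᵀ = (C * C⁻¹) * G⁻¹ * (Cᵀ⁻¹ * Cᵀ) := by
      simp only [Matrix.mul_assoc]
    rw [h1, mul_nonsing_inv C (isUnit_iff_ne_zero.mpr hCd0),
      nonsing_inv_mul Cᵀ (isUnit_iff_ne_zero.mpr hCTd0), Matrix.one_mul, Matrix.mul_one]
  have iGC : (G * C)⁻¹ = S⁻¹ * Cᵀ := by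
    rw [Matrix.mul_inv_rev, iG]
    have : C⁻¹ * (C * S⁻¹ * Cᵀ) = (C⁻¹ * C) * (S⁻¹ * Cᵀ) := by simp only [Matrix.mul_assoc]
    rw [this, nonsing_inv_mul C (isUnit_iff_ne_zero.mpr hCd0), Matrix.one_mul]
  have iCG : (Cᵀ * G)⁻¹ = C * S⁻¹ := by
    rw [Matrix.mul_inv_rev, iG]
    have : C * S⁻¹ * Cᵀ * Cᵀ⁻¹ = (C * S⁻¹) * (Cᵀ * Cᵀ⁻¹) := by simp only [Matrix.mul_assoc]
    rw [this, mul_nonsing_inv Cᵀ (isUnit_iff_ne_zero.mpr hCTd0), Matrix.mul_one]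
  -- entries of inverses
  have vSC : ∀ k, (S⁻¹ * Cᵀ) k L = P k L - P k p := by
    intro k
    rw [Matrix.mul_apply]
    have hcomm : ∀ r, S⁻¹ k r * Cᵀ r L = Chat m z L r * P k r := by
      intro r; rw [Matrix.transpose_apply, hPdef, hLdef, hCdef]; ring
    rw [Finset.sum_congr rfl (fun r _ => hcomm r)]
    rw [hLdef, row_collapse m z (fun r => P k r)]
  have vGC : (G * C)⁻¹ L L = P L L - P L p := by rw [iGC, vSC]
  have vCG : (Cᵀ * G)⁻¹ L L = P L L - P p L := by
    rw [iCG, Matrix.mul_apply]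
    have : ∀ k, C L k * S⁻¹ k L = Chat m z L k * P k L := by
      intro k; rw [hPdef, hLdef, hCdef]
    rw [Finset.sum_congr rfl (fun k _ => this k), hLdef, row_collapse m z (fun k => P k L)]
  have vG : G⁻¹ L L = (P L L - P L p) - (P p L - P p p) := by
    rw [iG, Matrix.mul_assoc, Matrix.mul_apply]
    have : ∀ k, C L k * (S⁻¹ * Cᵀ) k L = Chat m z L k * (S⁻¹ * Cᵀ) k L := by
      intro k; rw [hLdef, hCdef]
    rw [Finset.sum_congr rfl (fun k _ => this k), hLdef,
      row_collapse m z (fun k => (S⁻¹ * Cᵀ) k L), ← hLdef, vSC, vSC]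
  -- Jacobi step
  have jac : S.det * (P p p * P L L - P p L * P L p) = (hank m (aseq β z)).det := by
    set e : Fin m ⊕ Fin 2 ≃ Fin (m+2) := finSumFinEquiv with hedef
    set S' : Matrix (Fin m ⊕ Fin 2) (Fin m ⊕ Fin 2) F := S.submatrix e e with hS'def
    have hS'd : S'.det = S.det := Matrix.det_submatrix_equiv_self e S
    have hS'inv : S'⁻¹ = P.submatrix e e := by
      apply Matrix.inv_eq_left_inv
      rw [hS'def, hPdef, Matrix.submatrix_mul_equiv,
        nonsing_inv_mul S (isUnit_iff_ne_zero.mpr hSd0), Matrix.submatrix_one_equiv]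
    have hb11 : S'.toBlocks₁₁ = hank m (aseq β z) := by
      ext i j
      have hv : ∀ r : Fin m, ((e (Sum.inl r) : Fin (m+2)) : ℕ) = (r : ℕ) := by
        intro r; rw [hedef]; simp [finSumFinEquiv]
      have hle : ∀ r : Fin m, ((e (Sum.inl r) : Fin (m+2)) : ℕ) ≤ m := by
        intro r; rw [hv r]; omega
      simp only [Matrix.toBlocks₁₁, of_apply, hS'def, Matrix.submatrix_apply]
      rw [hSdef, S_entry m z β _ _ (hle i) (hle j), hv i, hv j]
      simp [hank, aseq, mseq]
    have hb22 : det (S'⁻¹.toBlocks₂₂) = P p p * P L L - P p L * P L p := by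
      have hv0 : e (Sum.inr (0 : Fin 2)) = p := by
        rw [hedef, hpdef]; apply Fin.ext; simp [finSumFinEquiv]
      have hv1 : e (Sum.inr (1 : Fin 2)) = L := by
        rw [hedef, hLdef]; apply Fin.ext; simp [finSumFinEquiv]
      rw [hS'inv]
      have hmat : (P.submatrix e e).toBlocks₂₂
          = Matrix.of (fun i j : Fin 2 => P (e (Sum.inr i)) (e (Sum.inr j))) := by
        ext i j; simp [Matrix.toBlocks₂₂]
      rw [hmat, Matrix.det_fin_two]
      simp only [of_apply]
      rw [hv0, hv1]
    have hjac := jacobi_two S' (isUnit_iff_ne_zero.mpr (by rw [hS'd]; exact hSd0))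
      (by rw [hb11]; exact isUnit_iff_ne_zero.mpr hA)
    rw [hS'd, hb11, hb22] at hjac
    exact hjac
  -- symmetry of P
  have hST : Sᵀ = S := by
    have hGT : Gᵀ = G := by
      ext i j; simp only [Matrix.transpose_apply, hGdef, hank, of_apply]; rw [Nat.add_comm]
    rw [hSdef, Matrix.transpose_mul, Matrix.transpose_mul, Matrix.transpose_transpose, hGT]
    rw [Matrix.mul_assoc]
  have hPsym : P L p = P p L := by
    have hti : S⁻¹ᵀ = S⁻¹ := by rw [Matrix.transpose_nonsing_inv, hST]
    calc P L p = S⁻¹ᵀ p L := by rw [hPdef, Matrix.transpose_apply]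
    _ = P p L := by rw [hti, hPdef]
  -- final assembly
  rw [← e1, ← e2, ← jac, pow_two, ← e3, vGC, vG, hSd, hGCd]
  rw [show (hank (m+2) β).det = G.det from by rw [hGdef]]
  rw [hPsym]
  ring

section generic
open MvPolynomial

lemma vand_ne {k : ℕ} (v : Fin k → ℚ) (hv : Function.Injective v) :
    (Matrix.vandermonde v).det ≠ 0 := by
  rw [Matrix.det_vandermonde]
  apply Finset.prod_ne_zero_iff.mpr
  intro i _
  apply Finset.prod_ne_zero_iff.mpr
  intro j hj
  rw [Finset.mem_Ioi] at hj
  exact sub_ne_zero.mpr (fun h => hj.ne' (hv h))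

lemma hankel_wt_det_ne (k : ℕ) (v : Fin k → ℚ) (hv : Function.Injective v)
    (c : Fin k → ℚ) (hc : ∀ r, c r ≠ 0) :
    (hank k (fun t => ∑ r, (c r)^2 * v r ^ t)).det ≠ 0 := by
  have hU : hank k (fun t => ∑ r, (c r)^2 * v r ^ t)
      = (Matrix.of (fun r i => c r * Matrix.vandermonde v r i))ᵀ
        * (Matrix.of (fun r i => c r * Matrix.vandermonde v r i)) := by
    ext i j
    simp only [hank, of_apply, Matrix.mul_apply, Matrix.transpose_apply,
      Matrix.vandermonde_apply]
    apply Finset.sum_congr rfl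
    intro r _
    rw [pow_add]
    ring
  rw [hU, Matrix.det_mul, Matrix.det_transpose, Matrix.det_mul_column]
  have hvd := vand_ne v hv
  have hcp : (∏ r, c r) ≠ 0 := Finset.prod_ne_zero_iff.mpr (fun r _ => hc r)
  exact mul_ne_zero (mul_ne_zero hcp hvd) (mul_ne_zero hcp hvd)

lemma hankel_sum_pow_det_ne (k : ℕ) (v : Fin k → ℚ) (hv : Function.Injective v) :
    (hank k (fun t => ∑ r, v r ^ t)).det ≠ 0 := by
  have h := hankel_wt_det_ne k v hv (fun _ => 1) (fun _ => one_ne_zero)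
  simpa using h

lemma core_ring (m : ℕ) (β : ℕ → ℝ) (z : ℝ) :
    (hank (m+1) (aseq β z)).det * (hank (m+1) β).det
      - (hank m (aseq β z)).det * (hank (m+2) β).det
      = ((hank (m+1) (mseq β z)).det)^2 := by
  classical
  let R := MvPolynomial ℕ ℚ
  let K := FractionRing R
  let φ : R →+* K := algebraMap R K
  have hφ : Function.Injective φ := IsFractionRing.injective R K
  let βR : ℕ → R := fun t => X t
  let zR : R := X (2*m+3)
  let βK : ℕ → K := fun t => φ (βR t)
  let zK : K := φ zR
  have hzK : zK ≠ 0 := by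
    simp only [zK, φ]
    rw [map_ne_zero_iff _ hφ]
    exact X_ne_zero _
  -- pointwise descriptions
  have hptA : ∀ t, aseq βK zK t = φ (aseq βR zR t) := by
    intro t; simp [aseq, mseq, βK, zK, map_sub, _root_.map_mul]
  have hptM : ∀ t, mseq βK zK t = φ (mseq βR zR t) := by
    intro t; simp [mseq, βK, zK, map_sub, _root_.map_mul]
  -- determinants over K as images of determinants over R
  have dA1 : (hank (m+1) (aseq βK zK)).det = φ ((hank (m+1) (aseq βR zR)).det) := by
    rw [det_map_hank]
    congr 1
    ext i j
    simp only [hank, of_apply, hptA]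
  have dA0 : (hank m (aseq βK zK)).det = φ ((hank m (aseq βR zR)).det) := by
    rw [det_map_hank]
    congr 1
    ext i j
    simp only [hank, of_apply, hptA]
  have dM : (hank (m+1) (mseq βK zK)).det = φ ((hank (m+1) (mseq βR zR)).det) := by
    rw [det_map_hank]
    congr 1
    ext i j
    simp only [hank, of_apply, hptM]
  have dB1 : (hank (m+1) βK).det = φ ((hank (m+1) βR).det) := by
    rw [det_map_hank]
  have dB2 : (hank (m+2) βK).det = φ ((hank (m+2) βR).det) := by
    rw [det_map_hank]
  -- nonvanishing of the generic Hankel determinant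
  have hGR : (hank (m+2) βR).det ≠ 0 := by
    intro h0
    have h1 := congrArg (MvPolynomial.eval
      (fun k => ∑ r : Fin (m+2), ((r : ℕ) : ℚ) ^ k)) h0
    rw [det_map_hank, map_zero] at h1
    have hfun : (fun t => (MvPolynomial.eval
        (fun k => ∑ r : Fin (m+2), ((r : ℕ) : ℚ) ^ k)) (βR t))
        = fun t => ∑ r : Fin (m+2), ((r : ℕ) : ℚ) ^ t := by
      funext t
      rw [show βR t = X t from rfl, eval_X]
    rw [hfun] at h1
    exact hankel_sum_pow_det_ne (m+2) (fun r => ((r : ℕ) : ℚ))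
      (fun r s h => Fin.ext (Nat.cast_injective h)) h1
  have hGK : (hank (m+2) βK).det ≠ 0 := by
    rw [dB2, map_ne_zero_iff _ hφ]
    exact hGR
  -- nonvanishing of the generic a-Hankel determinant
  have hAR : (hank m (aseq βR zR)).det ≠ 0 := by
    intro h0
    set g₂ : ℕ → ℚ := fun k => if k = 2*m+3 then 2
      else ∑ r : Fin m, (((r : ℕ) : ℚ) + 3) ^ k with hg₂
    have h1 := congrArg (MvPolynomial.eval g₂) h0
    rw [det_map_hank, map_zero] at h1
    have hent : (hank m (fun t => (MvPolynomial.eval g₂) (aseq βR zR t)))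
        = hank m (fun t => ∑ r : Fin m, ((2 - (((r : ℕ) : ℚ) + 3)))^2 * (((r : ℕ) : ℚ) + 3) ^ t) := by
      ext i j
      have hb : (i : ℕ) + (j : ℕ) + 2 < 2*m+3 := by
        have := i.isLt; have := j.isLt; omega
      have hun : ∀ u : ℕ, (MvPolynomial.eval g₂) (aseq βR zR u)
          = 2 * (2 * g₂ u - g₂ (u+1)) - (2 * g₂ (u+1) - g₂ (u+2)) := by
        intro u
        have hz2 : (MvPolynomial.eval g₂) zR = 2 := by
          rw [show zR = X (2*m+3) from rfl, eval_X]
          simp only [hg₂]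
          simp
        simp only [aseq, mseq, map_sub, _root_.map_mul, hz2,
          show ∀ u:ℕ, βR u = X u from fun _ => rfl, eval_X]
      simp only [hank, of_apply, hun]
      set t := (i : ℕ) + (j : ℕ) with ht
      have e0 : g₂ t = ∑ r : Fin m, (((r : ℕ) : ℚ) + 3) ^ t := by
        simp only [hg₂]; rw [if_neg (by omega)]
      have e1 : g₂ (t+1) = ∑ r : Fin m, (((r : ℕ) : ℚ) + 3) ^ (t+1) := by
        simp only [hg₂]; rw [if_neg (by omega)]
      have e2 : g₂ (t+2) = ∑ r : Fin m, (((r : ℕ) : ℚ) + 3) ^ (t+2) := by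
        simp only [hg₂]; rw [if_neg (by omega)]
      rw [e0, e1, e2]
      rw [Finset.mul_sum, Finset.mul_sum, ← Finset.sum_sub_distrib, Finset.mul_sum,
        ← Finset.sum_sub_distrib, ← Finset.sum_sub_distrib]
      apply Finset.sum_congr rfl
      intro r _
      rw [pow_succ, pow_succ, pow_succ]
      ring
    rw [hent] at h1
    exact hankel_wt_det_ne m (fun r => (((r : ℕ) : ℚ) + 3))
      (fun r s h => by
        apply Fin.ext
        apply @Nat.cast_injective ℚ _ _
        simp only [] at h
        linarith)
      (fun r => (2 - (((r : ℕ) : ℚ) + 3)))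
      (fun r => by
        have h0 : (0:ℚ) ≤ ((r : ℕ) : ℚ) := Nat.cast_nonneg _
        intro h
        linarith) h1
  have hAK : (hank m (aseq βK zK)).det ≠ 0 := by
    rw [dA0, map_ne_zero_iff _ hφ]
    exact hAR
  -- the identity over the fraction field, pulled back to R
  have hK := field_core m βK zK hzK hGK hAK
  rw [dA1, dA0, dM, dB1, dB2, ← _root_.map_mul φ, ← _root_.map_mul φ, ← map_sub φ, ← map_pow φ] at hK
  have hR := hφ hK
  -- push forward to ℝ
  let ψ : R →+* ℝ := (MvPolynomial.aeval (fun k => if k = 2*m+3 then z else β k) :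
    R →ₐ[ℚ] ℝ).toRingHom
  have hψ := congrArg ψ hR
  rw [map_sub, _root_.map_mul, _root_.map_mul, map_pow, det_map_hank, det_map_hank,
    det_map_hank, det_map_hank, det_map_hank] at hψ
  have hX : ∀ k : ℕ, k < 2*m+3 → ψ (X k) = β k := by
    intro k hk
    show (MvPolynomial.aeval (fun k => if k = 2*m+3 then z else β k)) (X k) = β k
    rw [aeval_X, if_neg (by omega)]
  have hz' : ψ zR = z := by
    show (MvPolynomial.aeval (fun k => if k = 2*m+3 then z else β k)) (X (2*m+3)) = z
    rw [aeval_X, if_pos rfl]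
  have hfA : hank (m+1) (fun t => ψ (aseq βR zR t)) = hank (m+1) (aseq β z) := by
    ext i j
    have hb : (i : ℕ) + (j : ℕ) + 2 < 2*m+3 := by have := i.isLt; have := j.isLt; omega
    simp only [hank, of_apply, aseq, mseq, map_sub, _root_.map_mul, hz',
      show ∀ u:ℕ, βR u = X u from fun _ => rfl]
    rw [hX _ (by omega), hX _ (by omega), hX _ (by omega)]
  have hfA' : hank m (fun t => ψ (aseq βR zR t)) = hank m (aseq β z) := by
    ext i j
    have hb : (i : ℕ) + (j : ℕ) + 2 < 2*m+3 := by have := i.isLt; have := j.isLt; omega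
    simp only [hank, of_apply, aseq, mseq, map_sub, _root_.map_mul, hz',
      show ∀ u:ℕ, βR u = X u from fun _ => rfl]
    rw [hX _ (by omega), hX _ (by omega), hX _ (by omega)]
  have hfM : hank (m+1) (fun t => ψ (mseq βR zR t)) = hank (m+1) (mseq β z) := by
    ext i j
    have hb : (i : ℕ) + (j : ℕ) + 1 < 2*m+3 := by have := i.isLt; have := j.isLt; omega
    simp only [hank, of_apply, mseq, map_sub, _root_.map_mul, hz',
      show ∀ u:ℕ, βR u = X u from fun _ => rfl]
    rw [hX _ (by omega), hX _ (by omega)]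
  have hfB1 : hank (m+1) (fun t => ψ (βR t)) = hank (m+1) β := by
    ext i j
    have hb : (i : ℕ) + (j : ℕ) < 2*m+3 := by have := i.isLt; have := j.isLt; omega
    simp only [hank, of_apply, show ∀ u:ℕ, βR u = X u from fun _ => rfl]
    exact hX _ hb
  have hfB2 : hank (m+2) (fun t => ψ (βR t)) = hank (m+2) β := by
    ext i j
    have hb : (i : ℕ) + (j : ℕ) < 2*m+3 := by have := i.isLt; have := j.isLt; omega
    simp only [hank, of_apply, show ∀ u:ℕ, βR u = X u from fun _ => rfl]
    exact hX _ hb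
  rw [hfA, hfA', hfM, hfB1, hfB2] at hψ
  exact hψ
end generic


/-- Fay-type identity for Hankel determinants: for an integrable
weight `ρ` supported in `[a,b]`, `n ≥ 1` and a real `z ∉ [a,b]`, defining
`D k`, `A k`, `B k` as the `k × k` Hankel determinants of the weights
`ρ`, `(z − u) ρ`, `ρ/(z − u)` respectively (size-`0` determinants equal `1`),
one has `A n * B n − A (n-1) * B (n+1) = (D n)²`. -/
theorem fay_identity_hankel
    (a b : ℝ) (hab : a < b) (ρ : ℝ → ℝ) (hρ : Integrable ρ)
    (hsupp : Function.support ρ ⊆ Set.Icc a b)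
    (n : ℕ) (hn : 1 ≤ n) (z : ℝ) (hz : z ∉ Set.Icc a b) :
    Matrix.det (Matrix.of fun i j : Fin n =>
        ∫ u : ℝ, u ^ ((i : ℕ) + (j : ℕ)) * ((z - u) * ρ u)) *
      Matrix.det (Matrix.of fun i j : Fin n =>
        ∫ u : ℝ, u ^ ((i : ℕ) + (j : ℕ)) * (ρ u / (z - u))) -
    Matrix.det (Matrix.of fun i j : Fin (n - 1) =>
        ∫ u : ℝ, u ^ ((i : ℕ) + (j : ℕ)) * ((z - u) * ρ u)) *
      Matrix.det (Matrix.of fun i j : Fin (n + 1) =>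
        ∫ u : ℝ, u ^ ((i : ℕ) + (j : ℕ)) * (ρ u / (z - u)))
      = (Matrix.det (Matrix.of fun i j : Fin n =>
          ∫ u : ℝ, u ^ ((i : ℕ) + (j : ℕ)) * ρ u)) ^ 2 := by
  obtain ⟨m, rfl⟩ : ∃ m, n = m + 1 := ⟨n - 1, by omega⟩
  -- support fact
  have hρ0 : ∀ u : ℝ, u ∉ Set.Icc a b → ρ u = 0 := by
    intro u hu
    by_contra hne
    exact hu (hsupp (Function.mem_support.mpr hne))
  -- distance from z to the interval
  obtain ⟨δ, hδpos, hδ⟩ : ∃ δ > 0, ∀ u ∈ Set.Icc a b, δ ≤ |z - u| := by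
    by_cases hza : z < a
    · refine ⟨a - z, by linarith, fun u hu => ?_⟩
      have h1 : a ≤ u := hu.1
      have h2 : a - z ≤ u - z := by linarith
      calc a - z ≤ u - z := h2
      _ ≤ |u - z| := le_abs_self _
      _ = |z - u| := abs_sub_comm u z
    · have hbz : b < z := by
        simp only [Set.mem_Icc, not_and, not_le] at hz
        exact hz (by linarith)
      refine ⟨z - b, by linarith, fun u hu => ?_⟩
      have h1 : u ≤ b := hu.2
      calc z - b ≤ z - u := by linarith
      _ ≤ |z - u| := le_abs_self _
  -- integrability of bounded multiples of ρ
  have key : ∀ g : ℝ → ℝ, Measurable g → (∃ C, ∀ u ∈ Set.Icc a b, |g u| ≤ C) →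
      Integrable (fun u => g u * ρ u) := by
    rintro g hg ⟨C, hC⟩
    have heq : (fun u => g u * ρ u) = fun u => (Set.Icc a b).indicator g u * ρ u := by
      funext u
      by_cases hu : u ∈ Set.Icc a b
      · rw [Set.indicator_of_mem hu]
      · rw [Set.indicator_of_notMem hu, hρ0 u hu, mul_zero, mul_zero]
    rw [heq]
    have hbdd : ∀ u, ‖(Set.Icc a b).indicator g u‖ ≤ max C 0 := by
      intro u
      by_cases hu : u ∈ Set.Icc a b
      · rw [Set.indicator_of_mem hu, Real.norm_eq_abs]
        exact le_max_of_le_left (hC u hu)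
      · rw [Set.indicator_of_notMem hu, norm_zero]
        exact le_max_right _ _
    exact hρ.bdd_mul ((hg.indicator measurableSet_Icc).aestronglyMeasurable) (c := max C 0) (Filter.Eventually.of_forall hbdd)
  set Rb : ℝ := max |a| |b| with hRb
  have hRu : ∀ u ∈ Set.Icc a b, |u| ≤ Rb := by
    intro u hu
    rw [abs_le]
    constructor
    · have := neg_abs_le a; have := le_max_left |a| |b|; linarith [hu.1]
    · have := le_abs_self b; have := le_max_right |a| |b|; linarith [hu.2]
  have I1 : ∀ k : ℕ, Integrable (fun u : ℝ => u ^ k * ρ u) := by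
    intro k
    apply key _ (measurable_id.pow_const k)
    refine ⟨Rb ^ k, fun u hu => ?_⟩
    rw [abs_pow]
    exact pow_le_pow_left₀ (abs_nonneg u) (hRu u hu) k
  have I3 : ∀ k : ℕ, Integrable (fun u : ℝ => (u ^ k / (z - u)) * ρ u) := by
    intro k
    apply key _ ((measurable_id.pow_const k).div (measurable_const.sub measurable_id))
    refine ⟨Rb ^ k / δ, fun u hu => ?_⟩
    show |u ^ k / (z - u)| ≤ Rb ^ k / δ
    rw [abs_div]
    apply div_le_div₀ (pow_nonneg (le_max_of_le_left (abs_nonneg a)) k)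
    · rw [abs_pow]; exact pow_le_pow_left₀ (abs_nonneg u) (hRu u hu) k
    · exact hδpos
    · exact hδ u hu
  set mb : ℕ → ℝ := fun k => ∫ u : ℝ, u ^ k * (ρ u / (z - u)) with hmb
  have e3 : ∀ k : ℕ, (fun u : ℝ => u ^ k * (ρ u / (z - u)))
      = fun u : ℝ => (u ^ k / (z - u)) * ρ u := by
    intro k; funext u; ring
  have I3' : ∀ k : ℕ, Integrable (fun u : ℝ => u ^ k * (ρ u / (z - u))) := by
    intro k; rw [e3 k]; exact I3 k
  -- the key moment relation
  have L1 : ∀ k : ℕ, (∫ u : ℝ, u ^ k * ρ u) = mseq mb z k := by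
    intro k
    have hpt : ∀ u : ℝ, u ^ k * ρ u
        = z * (u ^ k * (ρ u / (z - u))) - u ^ (k+1) * (ρ u / (z - u)) := by
      intro u
      by_cases hzu : z - u = 0
      · have hu : ρ u = 0 := by
          apply hρ0
          intro hmem
          have h0 : δ ≤ |z - u| := hδ u hmem
          rw [hzu, abs_zero] at h0
          linarith
        rw [hu]
        simp
      · field_simp
        ring
    calc (∫ u : ℝ, u ^ k * ρ u)
        = ∫ u : ℝ, (z * (u ^ k * (ρ u / (z - u))) - u ^ (k+1) * (ρ u / (z - u))) := by
          exact integral_congr_ae (Filter.Eventually.of_forall hpt)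
    _ = z * (∫ u : ℝ, u ^ k * (ρ u / (z - u))) - ∫ u : ℝ, u ^ (k+1) * (ρ u / (z - u)) := by
          rw [integral_sub ((I3' k).const_mul z) (I3' (k+1)), MeasureTheory.integral_const_mul]
    _ = mseq mb z k := by rw [hmb]; rfl
  have L2 : ∀ k : ℕ, (∫ u : ℝ, u ^ k * ((z - u) * ρ u)) = aseq mb z k := by
    intro k
    have hpt : ∀ u : ℝ, u ^ k * ((z - u) * ρ u) = z * (u ^ k * ρ u) - u ^ (k+1) * ρ u := by
      intro u; ring
    calc (∫ u : ℝ, u ^ k * ((z - u) * ρ u))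
        = ∫ u : ℝ, (z * (u ^ k * ρ u) - u ^ (k+1) * ρ u) := by
          exact integral_congr_ae (Filter.Eventually.of_forall hpt)
    _ = z * (∫ u : ℝ, u ^ k * ρ u) - ∫ u : ℝ, u ^ (k+1) * ρ u := by
          rw [integral_sub ((I1 k).const_mul z) (I1 (k+1)), MeasureTheory.integral_const_mul]
    _ = aseq mb z k := by rw [aseq, L1 k, L1 (k+1)]
  -- rewrite all four matrices
  have EA1 : (Matrix.of fun i j : Fin (m+1) =>
      ∫ u : ℝ, u ^ ((i : ℕ) + (j : ℕ)) * ((z - u) * ρ u)) = hank (m+1) (aseq mb z) := by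
    ext i j; simp only [Matrix.of_apply, hank]; exact L2 _
  have EA0 : (Matrix.of fun i j : Fin (m+1-1) =>
      ∫ u : ℝ, u ^ ((i : ℕ) + (j : ℕ)) * ((z - u) * ρ u)) = hank (m+1-1) (aseq mb z) := by
    ext i j; simp only [Matrix.of_apply, hank]; exact L2 _
  have EB1 : (Matrix.of fun i j : Fin (m+1) =>
      ∫ u : ℝ, u ^ ((i : ℕ) + (j : ℕ)) * (ρ u / (z - u))) = hank (m+1) mb := by
    ext i j; simp only [Matrix.of_apply, hank, hmb]
  have EB2 : (Matrix.of fun i j : Fin (m+1+1) =>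
      ∫ u : ℝ, u ^ ((i : ℕ) + (j : ℕ)) * (ρ u / (z - u))) = hank (m+1+1) mb := by
    ext i j; simp only [Matrix.of_apply, hank, hmb]
  have ED : (Matrix.of fun i j : Fin (m+1) =>
      ∫ u : ℝ, u ^ ((i : ℕ) + (j : ℕ)) * ρ u) = hank (m+1) (mseq mb z) := by
    ext i j; simp only [Matrix.of_apply, hank]; exact L1 _
  rw [EA1, EA0, EB1, EB2, ED]
  exact core_ring m mb z
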